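/- Overlay preserves flatness: if P_Φ, P_Ψ, P_Σ are flat occlusion models on ℓ(X, ℤ_{N_φ}), ℓ(X, ℤ_{N_ψ}), ℓ(X, ℤ_2) respectively, with flat constants λ_{Φ,n}, λ_{Ψ,m}, λ_{Σ,0}, λ_{Σ,1}, then the overlay model P_{Φ#_ΣΨ} is flat on ℓ(X, ℤ_{N_φ+N_ψ}) with constants λ_n = λ_{Φ,n} λ_{Σ,0} for 0 ≤ n < N_φ and λ_n = λ_{Ψ,n−N_φ} λ_{Σ,1} for N_φ ≤ n < N_φ+N_ψ. -/

import Mathlib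

/-- The overlay of `φ` over `ψ` with respect to the binary mask `σ`. -/
def overlayLabel {X : Type} (Nφ Nψ : ℕ)
    (φ : X → Fin Nφ) (ψ : X → Fin Nψ) (σ : X → Fin 2) : X → Fin (Nφ + Nψ) :=
  fun x => if σ x = 0 then Fin.castAdd Nψ (φ x) else Fin.natAdd Nφ (ψ x)

lemma prod_sum_mul {A B C : Type} [Fintype A] [Fintype B] [Fintype C]
    (f : A → ℝ) (g : B → ℝ) (h : C → ℝ) :
    ∑ a : A, ∑ b : B, ∑ c : C, f a * g b * h c
      = (∑ a, f a) * (∑ b, g b) * (∑ c, h c) := by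
  simp_rw [← Finset.mul_sum, ← Finset.sum_mul, ← Finset.sum_mul_sum]

theorem overlay_preserves_flatness
    (X : Type) [AddCommGroup X] [Fintype X] [DecidableEq X]
    (Nφ Nψ : ℕ) (hNφ : 1 ≤ Nφ) (hNψ : 1 ≤ Nψ)
    (PΦ : (X → Fin Nφ) → ℝ) (PΨ : (X → Fin Nψ) → ℝ) (PSig : (X → Fin 2) → ℝ)
    (hPΦ0 : ∀ φ, 0 ≤ PΦ φ) (hPΦ1 : ∑ φ : X → Fin Nφ, PΦ φ = 1)
    (hPΨ0 : ∀ ψ, 0 ≤ PΨ ψ) (hPΨ1 : ∑ ψ : X → Fin Nψ, PΨ ψ = 1)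
    (hPSig0 : ∀ σ, 0 ≤ PSig σ) (hPSig1 : ∑ σ : X → Fin 2, PSig σ = 1)
    (lamΦ : Fin Nφ → ℝ) (lamΨ : Fin Nψ → ℝ) (lamSig : Fin 2 → ℝ)
    (hflatΦ : ∀ (x : X) (n : Fin Nφ),
      (∑ φ : X → Fin Nφ, if φ x = n then PΦ φ else 0) = lamΦ n)
    (hflatΨ : ∀ (x : X) (m : Fin Nψ),
      (∑ ψ : X → Fin Nψ, if ψ x = m then PΨ ψ else 0) = lamΨ m)
    (hflatSig : ∀ (x : X) (s : Fin 2),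
      (∑ σ : X → Fin 2, if σ x = s then PSig σ else 0) = lamSig s) :
    ∀ (x : X) (n : Fin (Nφ + Nψ)),
      (∑ t : (X → Fin Nφ) × (X → Fin Nψ) × (X → Fin 2),
          if overlayLabel Nφ Nψ t.1 t.2.1 t.2.2 x = n
          then PΦ t.1 * PΨ t.2.1 * PSig t.2.2 else 0)
        =
      if h : (n : ℕ) < Nφ
      then lamΦ ⟨n, h⟩ * lamSig 0
      else lamΨ ⟨(n : ℕ) - Nφ, by omega⟩ * lamSig 1 := by
  intro x n
  by_cases h : (n : ℕ) < Nφ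
  · rw [dif_pos h]
    have key : ∀ (φ : X → Fin Nφ) (ψ : X → Fin Nψ) (σ : X → Fin 2),
        (if overlayLabel Nφ Nψ φ ψ σ x = n then PΦ φ * PΨ ψ * PSig σ else 0)
        = (if φ x = ⟨n, h⟩ then PΦ φ else 0) * PΨ ψ *
            (if σ x = 0 then PSig σ else 0) := by
      intro φ ψ σ
      simp only [overlayLabel]
      by_cases hσ : σ x = 0
      · simp only [if_pos hσ]
        by_cases hφ : φ x = ⟨n, h⟩
        · have hc : Fin.castAdd Nψ (φ x) = n := by
            apply Fin.ext; simp [hφ]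
          simp only [if_pos hc, if_pos hφ]
        · have hc : Fin.castAdd Nψ (φ x) ≠ n := by
            intro hc
            exact hφ (Fin.ext (by simpa using congrArg Fin.val hc))
          simp only [if_neg hc, if_neg hφ]; ring
      · simp only [if_neg hσ]
        have hc : Fin.natAdd Nφ (ψ x) ≠ n := by
          intro hc
          have := congrArg Fin.val hc
          simp [Fin.natAdd] at this
          omega
        simp only [if_neg hc]; ring
    calc (∑ t : (X → Fin Nφ) × (X → Fin Nψ) × (X → Fin 2),
          if overlayLabel Nφ Nψ t.1 t.2.1 t.2.2 x = n
          then PΦ t.1 * PΨ t.2.1 * PSig t.2.2 else 0)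
        = ∑ φ : X → Fin Nφ, ∑ ψ : X → Fin Nψ, ∑ σ : X → Fin 2,
            (if φ x = ⟨n, h⟩ then PΦ φ else 0) * PΨ ψ *
              (if σ x = 0 then PSig σ else 0) := by
          rw [Fintype.sum_prod_type]
          exact Finset.sum_congr rfl fun φ _ => by
            rw [Fintype.sum_prod_type]
            exact Finset.sum_congr rfl fun ψ _ =>
              Finset.sum_congr rfl fun σ _ => key φ ψ σ
      _ = _ := by
          rw [prod_sum_mul, hflatΦ, hPΨ1, hflatSig]; ring
  · rw [dif_neg h]
    have hle : Nφ ≤ (n : ℕ) := le_of_not_gt h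
    have hlt : (n : ℕ) - Nφ < Nψ := by have := n.isLt; omega
    have key : ∀ (φ : X → Fin Nφ) (ψ : X → Fin Nψ) (σ : X → Fin 2),
        (if overlayLabel Nφ Nψ φ ψ σ x = n then PΦ φ * PΨ ψ * PSig σ else 0)
        = PΦ φ * (if ψ x = ⟨(n : ℕ) - Nφ, hlt⟩ then PΨ ψ else 0) *
            (if σ x = 1 then PSig σ else 0) := by
      intro φ ψ σ
      simp only [overlayLabel]
      by_cases hσ : σ x = 0
      · have hσ1 : σ x ≠ 1 := by rw [hσ]; decide
        simp only [if_pos hσ, if_neg hσ1]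
        have hc : Fin.castAdd Nψ (φ x) ≠ n := by
          intro hc
          have := congrArg Fin.val hc
          simp [Fin.castAdd] at this
          have := (φ x).isLt
          omega
        simp only [if_neg hc]; ring
      · have hσ1 : σ x = 1 := by omega
        simp only [if_neg hσ, if_pos hσ1]
        by_cases hψ : ψ x = ⟨(n : ℕ) - Nφ, hlt⟩
        · have hc : Fin.natAdd Nφ (ψ x) = n := by
            apply Fin.ext
            have : (ψ x : ℕ) = (n : ℕ) - Nφ := congrArg Fin.val hψ
            simp [Fin.natAdd, this]
            omega
          simp only [if_pos hc, if_pos hψ]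
        · have hc : Fin.natAdd Nφ (ψ x) ≠ n := by
            intro hc
            apply hψ
            apply Fin.ext
            have := congrArg Fin.val hc
            simp [Fin.natAdd] at this ⊢
            omega
          simp only [if_neg hc, if_neg hψ]; ring
    calc (∑ t : (X → Fin Nφ) × (X → Fin Nψ) × (X → Fin 2),
          if overlayLabel Nφ Nψ t.1 t.2.1 t.2.2 x = n
          then PΦ t.1 * PΨ t.2.1 * PSig t.2.2 else 0)
        = ∑ φ : X → Fin Nφ, ∑ ψ : X → Fin Nψ, ∑ σ : X → Fin 2,
            PΦ φ * (if ψ x = ⟨(n : ℕ) - Nφ, hlt⟩ then PΨ ψ else 0) *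
              (if σ x = 1 then PSig σ else 0) := by
          rw [Fintype.sum_prod_type]
          exact Finset.sum_congr rfl fun φ _ => by
            rw [Fintype.sum_prod_type]
            exact Finset.sum_congr rfl fun ψ _ =>
              Finset.sum_congr rfl fun σ _ => key φ ψ σ
      _ = _ := by
          rw [prod_sum_mul, hflatΨ, hPΦ1, hflatSig]; ring
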